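/- Let K ⊆ L• be a knowledge base each of whose members is in normal form, and define R_i and S_i as in the LM-minimal construction. Then for every i ≥ 1, the interpretation (R_i)^∞_{S_i} (equivalently (R_{i-1})^∞_{S_i}, since R_i agrees with R_{i-1} on S_i) is a ranked interpretation and a ranked model of K. -/

import Mathlib

attribute [local instance] Classical.propDecidable

universe u

/-- Sentences of Propositional Typicality Logic over atoms `P`. -/
inductive PTL (P : Type u) : Type u
  | atom : P → PTL P
  | neg  : PTL P → PTL P
  | conj : PTL P → PTL P → PTL P
  | top  : PTL P
  | bot  : PTL P
  | typ  : PTL P → PTL P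

namespace PTL

/-- Material implication, defined from `¬` and `∧`. -/
def impl {P : Type u} (a b : PTL P) : PTL P := neg (conj a (neg b))

/-- Disjunction, defined from `¬` and `∧`. -/
def disj {P : Type u} (a b : PTL P) : PTL P := neg (conj (neg a) (neg b))

/-- Purely propositional sentences: no occurrence of the typicality operator. -/
def IsProp {P : Type u} : PTL P → Prop
  | atom _ => True
  | neg a => IsProp a
  | conj a b => IsProp a ∧ IsProp b
  | top => True
  | bot => True
  | typ _ => False

end PTL

/-- Propositional valuations. -/
abbrev Val (P : Type u) := P → Bool

/-- Satisfaction of a PTL sentence by a valuation, relative to a ranking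
function `rho : Val P → ℕ∞`. -/
def satR {P : Type u} (rho : Val P → ℕ∞) : Val P → PTL P → Prop
  | v, PTL.atom p => v p = true
  | v, PTL.neg a => ¬ satR rho v a
  | v, PTL.conj a b => satR rho v a ∧ satR rho v b
  | _, PTL.top => True
  | _, PTL.bot => False
  | v, PTL.typ a => satR rho v a ∧ ∀ v', rho v' < rho v → ¬ satR rho v' a

/-- The convexity property of ranking functions. -/
def RkConvex {P : Type u} (rho : Val P → ℕ∞) : Prop :=
  ∀ (v : Val P) (i : ℕ), rho v = (i : ℕ∞) → ∀ j : ℕ, j < i → ∃ v', rho v' = (j : ℕ∞)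

/-- A ranked interpretation: a convex ranking function on valuations. -/
structure RankedInterp (P : Type u) where
  rk : Val P → ℕ∞
  convex : RkConvex rk

/-- `rho` is a ranked model of `a`: every possible valuation satisfies `a`. -/
def modelsR {P : Type u} (rho : Val P → ℕ∞) (a : PTL P) : Prop :=
  ∀ v, rho v < ⊤ → satR rho v a

/-- `R ⊨ a`. -/
def RankedInterp.models {P : Type u} (R : RankedInterp P) (a : PTL P) : Prop :=
  modelsR R.rk a

/-- `R` is a ranked model of the knowledge base `K`. -/
def modelsSet {P : Type u} (R : RankedInterp P) (K : Set (PTL P)) : Prop :=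
  ∀ a ∈ K, R.models a

/-- Ranked entailment consequences of `K`. -/
def Cn0 {P : Type u} (K : Set (PTL P)) : Set (PTL P) :=
  {a | ∀ R : RankedInterp P, modelsSet R K → R.models a}

/-- Conjunction of a list of sentences (empty conjunction is `⊤`). -/
def bigConj {P : Type u} : List (PTL P) → PTL P
  | [] => PTL.top
  | a :: l => PTL.conj a (bigConj l)

/-- Disjunction of a list of sentences (empty disjunction is `⊥`). -/
def bigDisj {P : Type u} : List (PTL P) → PTL P
  | [] => PTL.bot
  | a :: l => PTL.disj a (bigDisj l)

/-- `a` is in normal form: `⋀_{i≤t} •θᵢ → (φ ∨ ⋁_{i≤s} •ψᵢ)` with all the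
`θᵢ`, `φ`, `ψᵢ` purely propositional. -/
def InNormalForm {P : Type u} (a : PTL P) : Prop :=
  ∃ (ths : List (PTL P)) (phi : PTL P) (pss : List (PTL P)),
    (∀ t ∈ ths, t.IsProp) ∧ phi.IsProp ∧ (∀ s ∈ pss, s.IsProp) ∧
    a = PTL.impl (bigConj (ths.map PTL.typ)) (PTL.disj phi (bigDisj (pss.map PTL.typ)))

/-- `R^1_S`: increase by one the rank of every valuation not in `S`. -/
noncomputable def bump {P : Type u} (rho : Val P → ℕ∞) (S : Set (Val P)) : Val P → ℕ∞ :=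
  fun v => if v ∈ S then rho v else rho v + 1

/-- `R^∞_S`: make every valuation not in `S` impossible. -/
noncomputable def toInf {P : Type u} (rho : Val P → ℕ∞) (S : Set (Val P)) : Val P → ℕ∞ :=
  fun v => if v ∈ S then rho v else ⊤

/-- `⟦K⟧_rho`: the possible valuations satisfying every member of `K`. -/
def KExt {P : Type u} (K : Set (PTL P)) (rho : Val P → ℕ∞) : Set (Val P) :=
  {v | rho v < ⊤ ∧ ∀ a ∈ K, satR rho v a}

/-- The sequence `R_i` of the LM-minimal construction. -/
noncomputable def Rseq {P : Type u} (K : Set (PTL P)) : ℕ → Val P → ℕ∞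
  | 0 => fun _ => 0
  | i + 1 => bump (Rseq K i) (KExt K (Rseq K i))

/-- The sequence `S_i` of the LM-minimal construction:
`S_0 = ∅`, `S_{i+1} = ⟦K⟧_{R_i}`. -/
noncomputable def Sseq {P : Type u} (K : Set (PTL P)) : ℕ → Set (Val P)
  | 0 => ∅
  | i + 1 => KExt K (Rseq K i)

/-! ### Auxiliary lemmas -/

/-- Satisfaction of a purely propositional sentence does not depend on the ranking. -/
lemma satR_isProp {P : Type u} (a : PTL P) (ha : a.IsProp)
    (rho rho' : Val P → ℕ∞) (v : Val P) : satR rho v a ↔ satR rho' v a := by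
  induction a with
  | atom p => simp [satR]
  | neg a ih => simp only [satR]; exact not_congr (ih ha)
  | conj a b iha ihb =>
      obtain ⟨h1, h2⟩ := ha
      simp only [satR]; exact and_congr (iha h1) (ihb h2)
  | top => simp [satR]
  | bot => simp [satR]
  | typ a _ => exact absurd ha id

/-- "Flat" sentences: every occurrence of `•` is applied to a purely
propositional sentence. -/
def Flat {P : Type u} : PTL P → Prop
  | PTL.atom _ => True
  | PTL.neg a => Flat a
  | PTL.conj a b => Flat a ∧ Flat b
  | PTL.top => True
  | PTL.bot => True
  | PTL.typ a => a.IsProp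

lemma Flat.of_isProp {P : Type u} (a : PTL P) (ha : a.IsProp) : Flat a := by
  induction a with
  | atom p => trivial
  | neg a ih => exact ih ha
  | conj a b iha ihb => exact ⟨iha ha.1, ihb ha.2⟩
  | top => trivial
  | bot => trivial
  | typ a _ => exact absurd ha id

lemma flat_bigConj {P : Type u} (l : List (PTL P)) (h : ∀ t ∈ l, Flat t) :
    Flat (bigConj l) := by
  induction l with
  | nil => trivial
  | cons a l ih =>
      exact ⟨h a List.mem_cons_self, ih fun t ht => h t (List.mem_cons_of_mem a ht)⟩

lemma flat_bigDisj {P : Type u} (l : List (PTL P)) (h : ∀ t ∈ l, Flat t) :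
    Flat (bigDisj l) := by
  induction l with
  | nil => trivial
  | cons a l ih =>
      exact ⟨h a List.mem_cons_self, ih fun t ht => h t (List.mem_cons_of_mem a ht)⟩

lemma Flat.of_normalForm {P : Type u} (a : PTL P) (ha : InNormalForm a) : Flat a := by
  obtain ⟨ths, phi, pss, hths, hphi, hpss, rfl⟩ := ha
  have h1 : Flat (bigConj (ths.map PTL.typ)) :=
    flat_bigConj _ fun t ht => by
      obtain ⟨s, hs, rfl⟩ := List.mem_map.mp ht
      exact hths s hs
  have h2 : Flat phi := Flat.of_isProp phi hphi
  have h3 : Flat (bigDisj (pss.map PTL.typ)) :=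
    flat_bigDisj _ fun t ht => by
      obtain ⟨s, hs, rfl⟩ := List.mem_map.mp ht
      exact hpss s hs
  exact show Flat _ ∧ Flat _ ∧ Flat _ from ⟨h1, h2, h3⟩

/-- For flat sentences, satisfaction at `v` only depends on which worlds are
strictly below `v`. -/
lemma sat_transfer {P : Type u} (rho rho' : Val P → ℕ∞) (v : Val P)
    (h : ∀ u, rho u < rho v ↔ rho' u < rho' v) :
    ∀ a : PTL P, Flat a → (satR rho v a ↔ satR rho' v a) := by
  intro a ha
  induction a with
  | atom p => simp [satR]
  | neg a ih => simp only [satR]; exact not_congr (ih ha)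
  | conj a b iha ihb =>
      simp only [satR]; exact and_congr (iha ha.1) (ihb ha.2)
  | top => simp [satR]
  | bot => simp [satR]
  | typ a _ =>
      have hprop : a.IsProp := ha
      simp only [satR]
      refine and_congr (satR_isProp a hprop rho rho' v) ?_
      refine forall_congr' fun u => ?_
      rw [h u, satR_isProp a hprop rho rho' u]

section Construction

variable {P : Type u} (K : Set (PTL P))

lemma Rseq_le (i : ℕ) (v : Val P) : Rseq K i v ≤ (i : ℕ∞) := by
  induction i with
  | zero => simp [Rseq]
  | succ i ih =>
      show bump (Rseq K i) (KExt K (Rseq K i)) v ≤ ((i + 1 : ℕ) : ℕ∞)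
      unfold bump
      split
      · exact le_trans ih (by exact_mod_cast Nat.le_succ i)
      · calc Rseq K i v + 1 ≤ (i : ℕ∞) + 1 := add_le_add_left ih 1
          _ = ((i + 1 : ℕ) : ℕ∞) := by push_cast; rfl

lemma Rseq_lt_top (i : ℕ) (v : Val P) : Rseq K i v < ⊤ :=
  lt_of_le_of_lt (Rseq_le K i v) (by exact_mod_cast WithTop.coe_lt_top i)

variable (hK : ∀ a ∈ K, InNormalForm a)
include hK

/-- Monotonicity step: assuming the rank characterization at stage `i`,
`S_{i+1} ⊆ S_{i+2}`. -/
lemma step_mem (i : ℕ)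
    (hF2i : ∀ u, u ∉ KExt K (Rseq K i) → Rseq K i u = (i : ℕ∞)) :
    KExt K (Rseq K i) ⊆ KExt K (Rseq K (i + 1)) := by
  intro v hv
  set R := Rseq K i with hR
  have hstep : Rseq K (i + 1) = bump R (KExt K R) := rfl
  have hRv' : Rseq K (i + 1) v = R v := by
    rw [hstep]; unfold bump; rw [if_pos hv]
  have hlt : ∀ u, R u < R v ↔ Rseq K (i + 1) u < Rseq K (i + 1) v := by
    intro u
    by_cases hu : u ∈ KExt K R
    · rw [hRv', hstep]; unfold bump; rw [if_pos hu]
    · have hRu : R u = (i : ℕ∞) := hF2i u hu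
      have hRu' : Rseq K (i + 1) u = (i : ℕ∞) + 1 := by
        rw [hstep]; unfold bump; rw [if_neg hu, hRu]
      constructor
      · intro hcon
        exact absurd (lt_of_lt_of_le (hRu ▸ hcon) (Rseq_le K i v)) (lt_irrefl _)
      · intro hcon
        rw [hRu', hRv'] at hcon
        exact absurd (lt_of_le_of_lt (le_trans (Rseq_le K i v) le_self_add) hcon)
          (lt_irrefl _)
  refine ⟨by rw [hRv']; exact hv.1, fun a ha => ?_⟩
  exact (sat_transfer R (Rseq K (i + 1)) v hlt a
    (Flat.of_normalForm a (hK a ha))).mp (hv.2 a ha)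

/-- Every world outside `S_{i+1}` has rank exactly `i` under `R_i`. -/
lemma rank_outside (i : ℕ) :
    ∀ u, u ∉ KExt K (Rseq K i) → Rseq K i u = (i : ℕ∞) := by
  induction i with
  | zero => intro u _; simp [Rseq]
  | succ i ih =>
      intro u hu
      by_cases hS : u ∈ KExt K (Rseq K i)
      · exact absurd (step_mem K hK i ih hS) hu
      · show bump (Rseq K i) (KExt K (Rseq K i)) u = ((i + 1 : ℕ) : ℕ∞)
        unfold bump
        rw [if_neg hS, ih u hS]
        push_cast; rfl

/-- Convexity of the ranks realized inside `S_{i+1}` (under `R_i`). -/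
lemma Sconvex (i : ℕ) :
    ∀ v ∈ KExt K (Rseq K i), ∀ j : ℕ, (j : ℕ∞) < Rseq K i v →
      ∃ w ∈ KExt K (Rseq K i), Rseq K i w = (j : ℕ∞) := by
  induction i with
  | zero =>
      intro v _ j hj
      exact absurd hj (by simp [Rseq])
  | succ i ih =>
      intro v hv j hj
      set R := Rseq K i with hRdef
      have hstep : Rseq K (i + 1) = bump R (KExt K R) := rfl
      by_cases hvS : v ∈ KExt K R
      · have hRv' : Rseq K (i + 1) v = R v := by
          rw [hstep]; unfold bump; rw [if_pos hvS]
        rw [hRv'] at hj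
        obtain ⟨w, hw, hwj⟩ := ih v hvS j hj
        refine ⟨w, step_mem K hK i (rank_outside K hK i) hw, ?_⟩
        rw [hstep]; unfold bump; rw [if_pos hw, hwj]
      · have hRv : R v = (i : ℕ∞) := rank_outside K hK i v hvS
        have hRv' : Rseq K (i + 1) v = ((i + 1 : ℕ) : ℕ∞) := by
          rw [hstep]; unfold bump; rw [if_neg hvS, hRv]; push_cast; rfl
        rw [hRv'] at hj
        have hji : j ≤ i := by
          have : j < i + 1 := by exact_mod_cast hj
          omega
        by_cases hex : ∃ w ∈ KExt K R, R w = (i : ℕ∞)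
        · obtain ⟨w₀, hw₀S, hw₀⟩ := hex
          rcases eq_or_lt_of_le hji with heq | hlt
          · refine ⟨w₀, step_mem K hK i (rank_outside K hK i) hw₀S, ?_⟩
            rw [hstep]; unfold bump; rw [if_pos hw₀S, hw₀, heq]
          · obtain ⟨w, hw, hwj⟩ := ih w₀ hw₀S j (by rw [hw₀]; exact_mod_cast hlt)
            refine ⟨w, step_mem K hK i (rank_outside K hK i) hw, ?_⟩
            rw [hstep]; unfold bump; rw [if_pos hw, hwj]
        · exfalso
          push_neg at hex
          apply hvS
          have hlt : ∀ u, R u < R v ↔ Rseq K (i + 1) u < Rseq K (i + 1) v := by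
            intro u
            by_cases hu : u ∈ KExt K R
            · have hu_lt : R u < (i : ℕ∞) :=
                lt_of_le_of_ne (Rseq_le K i u) (hex u hu)
              have hu' : Rseq K (i + 1) u = R u := by
                rw [hstep]; unfold bump; rw [if_pos hu]
              constructor
              · intro _
                rw [hu', hRv']
                exact lt_of_lt_of_le hu_lt (by exact_mod_cast Nat.le_succ i)
              · intro _
                rw [hRv]; exact hu_lt
            · have hu0 : R u = (i : ℕ∞) := rank_outside K hK i u hu
              have hu' : Rseq K (i + 1) u = ((i + 1 : ℕ) : ℕ∞) := by
                rw [hstep]; unfold bump; rw [if_neg hu, hu0]; push_cast; rfl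
              constructor
              · intro hcon; rw [hu0, hRv] at hcon; exact absurd hcon (lt_irrefl _)
              · intro hcon; rw [hu', hRv'] at hcon; exact absurd hcon (lt_irrefl _)
          refine ⟨by rw [hRv]; exact_mod_cast WithTop.coe_lt_top i, fun a ha => ?_⟩
          exact (sat_transfer R (Rseq K (i + 1)) v hlt a
            (Flat.of_normalForm a (hK a ha))).mpr (hv.2 a ha)

end Construction

/-- for every `i ≥ 1`, `(R_i)^∞_{S_i}` is a ranked interpretation
and a ranked model of `K`. -/
theorem ptl_stage_is_model {P : Type u} [Fintype P] [DecidableEq P]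
    (K : Set (PTL P)) (hK : ∀ a ∈ K, InNormalForm a) (i : ℕ) (hi : 1 ≤ i) :
    RkConvex (toInf (Rseq K i) (Sseq K i)) ∧
    ∀ a ∈ K, modelsR (toInf (Rseq K i) (Sseq K i)) a := by
  obtain ⟨k, rfl⟩ : ∃ k, i = k + 1 := ⟨i - 1, by omega⟩
  set R := Rseq K k with hRdef
  set S := KExt K R with hSdef
  have hSeq : Sseq K (k + 1) = S := rfl
  have hstep : Rseq K (k + 1) = bump R S := rfl
  have hrho : toInf (Rseq K (k + 1)) (Sseq K (k + 1)) = toInf R S := by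
    funext v
    rw [hSeq, hstep]
    unfold toInf bump
    by_cases hv : v ∈ S
    · rw [if_pos hv, if_pos hv, if_pos hv]
    · rw [if_neg hv, if_neg hv]
  rw [hrho]
  have hrho_mem : ∀ v ∈ S, toInf R S v = R v := fun v hv => if_pos hv
  have hrho_out : ∀ v, v ∉ S → toInf R S v = ⊤ := fun v hv => if_neg hv
  constructor
  · -- convexity
    intro v n hvn j hj
    by_cases hvS : v ∈ S
    · have hRv : R v = (n : ℕ∞) := by rw [← hrho_mem v hvS]; exact hvn
      obtain ⟨w, hw, hwj⟩ := Sconvex K hK k v hvS j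
        (by rw [← hRdef, hRv]; exact_mod_cast hj)
      exact ⟨w, by rw [hrho_mem w hw, hRdef]; exact hwj⟩
    · rw [hrho_out v hvS] at hvn
      exact absurd hvn.symm (by exact_mod_cast WithTop.coe_ne_top)
  · -- ranked model of K
    intro a ha v hv
    by_cases hvS : v ∈ S
    · have hlt : ∀ u, R u < R v ↔ toInf R S u < toInf R S v := by
        intro u
        by_cases hu : u ∈ S
        · rw [hrho_mem u hu, hrho_mem v hvS]
        · have hu0 : R u = (k : ℕ∞) := by
            rw [hRdef]; exact rank_outside K hK k u hu
          constructor
          · intro hcon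
            exact absurd (lt_of_lt_of_le (hu0 ▸ hcon) (Rseq_le K k v)) (lt_irrefl _)
          · intro hcon
            rw [hrho_out u hu] at hcon
            exact absurd hcon not_top_lt
      exact (sat_transfer R (toInf R S) v hlt a
        (Flat.of_normalForm a (hK a ha))).mp (hvS.2 a ha)
    · rw [hrho_out v hvS] at hv
      exact absurd hv (lt_irrefl _)
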